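/- Assume quantile regression is under quasi-specification with coefficients (α^QR,β^QR), and set U^QR := ∫₀¹ 1_{{Y > α^QR(t)+β^QR(t)·X}} dt. Then U^QR solves the correlation maximization problem with mean-independence constraint: for every random variable V uniformly distributed on [0,1] with 𝔼(X|V)=0, one has 𝔼(V·Y) ≤ 𝔼(U^QR·Y). -/

import Mathlib

open MeasureTheory ProbabilityTheory Set
open scoped RealInnerProductSpace

noncomputable section

open scoped ENNReal


lemma aux_pointwise (g : ℝ → ℝ) (hc : Continuous g) (hsm : StrictMonoOn g (Icc 0 1)) (y : ℝ)
    {u : ℝ} (hu : u = (volume (Icc (0:ℝ) 1 ∩ {t | g t < y})).toReal) :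
    u ∈ Icc (0:ℝ) 1 ∧
    ((∫ t in (0:ℝ)..1, (if g t < y then (1:ℝ) else 0)) = u) ∧
    (∀ t ∈ Icc (0:ℝ) 1, t < u → g t < y) ∧
    (∀ t ∈ Icc (0:ℝ) 1, g t < y → t ≤ u) ∧
    (∀ v ∈ Icc (0:ℝ) 1, v * y - ∫ t in (0:ℝ)..v, g t ≤ u * y - ∫ t in (0:ℝ)..u, g t) := by
  set S : Set ℝ := Icc (0:ℝ) 1 ∩ {t | g t < y} with hS
  have hSm : MeasurableSet S := measurableSet_Icc.inter (measurableSet_lt hc.measurable measurable_const)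
  have hSsub : S ⊆ Icc 0 1 := inter_subset_left
  have hdc : ∀ t ∈ S, ∀ s ∈ Icc (0:ℝ) 1, s ≤ t → s ∈ S := by
    intro t ht s hs hst
    rcases eq_or_lt_of_le hst with rfl | hlt
    · exact ht
    · exact ⟨hs, lt_trans (hsm hs ht.1 hlt) ht.2⟩
  have hvolS : volume S ≤ 1 := by
    calc volume S ≤ volume (Icc (0:ℝ) 1) := measure_mono hSsub
    _ = 1 := by simp
  have hSfin : volume S ≠ ⊤ := lt_of_le_of_lt hvolS (by norm_num) |>.ne
  have humem : u ∈ Icc (0:ℝ) 1 := by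
    constructor
    · rw [hu]; exact ENNReal.toReal_nonneg
    · rw [hu]
      have := ENNReal.toReal_mono (by norm_num : (1:ℝ≥0∞) ≠ ⊤) hvolS
      simpa using this
  have hle : ∀ t ∈ S, t ≤ u := by
    intro t ht
    have h1 : Icc (0:ℝ) t ⊆ S := fun s hs => hdc t ht s ⟨hs.1, le_trans hs.2 (hSsub ht).2⟩ hs.2
    have h2 : ENNReal.ofReal t ≤ volume S := by
      calc ENNReal.ofReal t = volume (Icc (0:ℝ) t) := by simp
      _ ≤ volume S := measure_mono h1
    have := ENNReal.toReal_mono hSfin h2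
    rwa [ENNReal.toReal_ofReal (hSsub ht).1, ← hu] at this
  have hlt : ∀ t ∈ Icc (0:ℝ) 1, t < u → t ∈ S := by
    intro t ht htu
    by_contra hts
    have hsub : S ⊆ Icc 0 t := by
      intro s hs
      refine ⟨(hSsub hs).1, ?_⟩
      by_contra hst
      exact hts (hdc s hs t ht (le_of_lt (not_le.mp hst)))
    have h2 : volume S ≤ ENNReal.ofReal t := by
      calc volume S ≤ volume (Icc (0:ℝ) t) := measure_mono hsub
      _ = ENNReal.ofReal t := by simp
    have := ENNReal.toReal_mono (by simp) h2
    rw [← hu, ENNReal.toReal_ofReal ht.1] at this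
    exact absurd htu (not_lt.mpr this)
  have hint : (∫ t in (0:ℝ)..1, (if g t < y then (1:ℝ) else 0)) = u := by
    rw [intervalIntegral.integral_of_le zero_le_one]
    have heq : EqOn (fun t => if g t < y then (1:ℝ) else 0) (S.indicator fun _ => (1:ℝ)) (Ioc 0 1) := by
      intro t ht
      by_cases h : g t < y
      · simp only [h, if_true, indicator]
        rw [if_pos ⟨Ioc_subset_Icc_self ht, h⟩]
      · simp only [h, if_false, indicator]
        rw [if_neg (fun hmem => h hmem.2)]
    rw [setIntegral_congr_fun measurableSet_Ioc heq, integral_indicator hSm]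
    rw [setIntegral_const, Measure.real, Measure.restrict_apply hSm]
    have : S ∩ Ioc 0 1 = S \ {0} := by
      ext t
      constructor
      · rintro ⟨h1, h2⟩
        refine ⟨h1, fun h0 => ?_⟩
        rw [mem_singleton_iff] at h0
        rw [h0] at h2
        exact absurd h2.1 (lt_irrefl 0)
      · rintro ⟨h1, h2⟩
        refine ⟨h1, lt_of_le_of_ne (hSsub h1).1 (fun h => h2 (by simp [← h])), (hSsub h1).2⟩
    rw [this, measure_diff_null (measure_singleton 0), smul_eq_mul, mul_one, ← hu]
  refine ⟨humem, hint, fun t ht htu => (hlt t ht htu).2, fun t ht hgt => hle t ⟨ht, hgt⟩, ?_⟩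
  intro v hv
  have hIg : ∀ a b : ℝ, IntervalIntegrable g volume a b := fun a b => hc.intervalIntegrable a b
  have hsub : (∫ t in (0:ℝ)..v, g t) - ∫ t in (0:ℝ)..u, g t = ∫ t in u..v, g t :=
    intervalIntegral.integral_interval_sub_left (hIg 0 v) (hIg 0 u)
  have key : (v - u) * y ≤ ∫ t in u..v, g t := by
    rcases le_or_gt u v with h' | h'
    · rw [intervalIntegral.integral_of_le h']
      have hmono' : ∀ t ∈ Ioc u v, y ≤ g t := by
        intro t ht
        have htIcc : t ∈ Icc (0:ℝ) 1 := ⟨le_trans humem.1 (le_of_lt ht.1), le_trans ht.2 hv.2⟩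
        by_contra hgy
        exact absurd (hle t ⟨htIcc, not_le.mp hgy⟩) (not_le.mpr ht.1)
      calc (v - u) * y = ∫ _ in Ioc u v, y := by
            rw [setIntegral_const, smul_eq_mul, Measure.real, Real.volume_Ioc, ENNReal.toReal_ofReal (sub_nonneg.2 h')]
      _ ≤ ∫ t in Ioc u v, g t :=
            setIntegral_mono_on (integrableOn_const measure_Ioc_lt_top.ne)
              (hc.integrableOn_Ioc) measurableSet_Ioc hmono'
    · rw [intervalIntegral.integral_symm, intervalIntegral.integral_of_le (le_of_lt h')]
      have hne : ∀ᵐ t ∂(volume.restrict (Ioc v u)), t ≠ u :=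
        ae_restrict_of_ae (by simpa using (ae_iff.mpr (by simp : volume {t : ℝ | ¬ t ≠ u} = 0)))
      have hmono' : ∀ᵐ t ∂(volume.restrict (Ioc v u)), g t ≤ y := by
        filter_upwards [ae_restrict_mem measurableSet_Ioc, hne] with t ht htne
        have htIcc : t ∈ Icc (0:ℝ) 1 := ⟨le_trans hv.1 (le_of_lt ht.1), le_trans ht.2 humem.2⟩
        exact le_of_lt (hlt t htIcc (lt_of_le_of_ne ht.2 htne)).2
      have h2 : (∫ t in Ioc v u, g t) ≤ (u - v) * y := by
        calc (∫ t in Ioc v u, g t) ≤ ∫ _ in Ioc v u, y :=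
              setIntegral_mono_ae_restrict (hc.integrableOn_Ioc)
                (integrableOn_const measure_Ioc_lt_top.ne) hmono'
        _ = (u - v) * y := by
              rw [setIntegral_const, smul_eq_mul, Measure.real, Real.volume_Ioc, ENNReal.toReal_ofReal (sub_nonneg.2 (le_of_lt h'))]
      linarith
  linarith

open scoped RealInnerProductSpace

lemma aux_repr {E : Type*} [NormedAddCommGroup E] [NormedSpace ℝ E]
    (h : ℝ → E) (hch : Continuous h) {u : ℝ} (hu : u ∈ Icc (0:ℝ) 1) :
    (∫ t in (0:ℝ)..u, h t) = ∫ t, (if t < u then h t else 0) ∂(volume.restrict (Ioc (0:ℝ) 1)) := by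
  have h1 : (fun t => if t < u then h t else 0) = (Iio u).indicator h := by
    ext t; by_cases ht : t < u <;> simp [indicator, ht]
  rw [h1, integral_indicator measurableSet_Iio, Measure.restrict_restrict measurableSet_Iio]
  have h2 : Iio u ∩ Ioc 0 1 = Ioo 0 u := by
    ext t
    constructor
    · rintro ⟨ha, hb, _⟩; exact ⟨hb, ha⟩
    · rintro ⟨ha, hb⟩; exact ⟨hb, ha, le_trans (le_of_lt hb) hu.2⟩
  rw [h2, ← integral_Ioc_eq_integral_Ioo, intervalIntegral.integral_of_le hu.1]

lemma euclid_coord_le {N : ℕ} (x : EuclideanSpace ℝ (Fin N)) (i : Fin N) : |x i| ≤ ‖x‖ := by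
  calc |x i| = |⟪EuclideanSpace.single i (1:ℝ), x⟫| := by
        rw [EuclideanSpace.inner_single_left]; simp
  _ ≤ ‖EuclideanSpace.single i (1:ℝ)‖ * ‖x‖ := abs_real_inner_le_norm _ _
  _ = ‖x‖ := by rw [EuclideanSpace.norm_single]; simp

lemma aux_condexp {Ωs : Type*} [MeasurableSpace Ωs] (P : Measure Ωs) [IsProbabilityMeasure P]
    {N : ℕ} (X : Ωs → EuclideanSpace ℝ (Fin N)) (hX : Measurable X)
    (Cx : ℝ) (hCx : ∀ ω, ‖X ω‖ ≤ Cx)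
    (V : Ωs → ℝ) (hV : Measurable V)
    (hcond : P[X | MeasurableSpace.comap V inferInstance] =ᵐ[P] 0)
    (h : ℝ → EuclideanSpace ℝ (Fin N)) (hh : Measurable h)
    (Ch : ℝ) (hCh : ∀ᵐ ω ∂P, ‖h (V ω)‖ ≤ Ch) :
    ∫ ω, ⟪h (V ω), X ω⟫ ∂P = 0 := by
  have hm' : MeasurableSpace.comap V inferInstance ≤ _ := hV.comap_le
  have hVm' : Measurable[MeasurableSpace.comap V inferInstance] V := fun s hs => ⟨s, hs, rfl⟩
  have hXint : Integrable X P :=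
    ⟨hX.aestronglyMeasurable, HasFiniteIntegral.of_bounded (ae_of_all _ hCx)⟩
  have hXi_meas : ∀ i : Fin N, Measurable (fun ω => X ω i) :=
    fun i => (measurable_pi_apply i).comp ((WithLp.measurable_ofLp 2 _).comp hX)
  have hXi_bdd : ∀ (i : Fin N) ω, |X ω i| ≤ Cx :=
    fun i ω => le_trans (euclid_coord_le (X ω) i) (hCx ω)
  have hXi_int : ∀ i : Fin N, Integrable (fun ω => X ω i) P := fun i =>
    ⟨(hXi_meas i).aestronglyMeasurable,
      HasFiniteIntegral.of_bounded (ae_of_all _ (fun ω => by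
        rw [Real.norm_eq_abs]; exact hXi_bdd i ω))⟩
  have hXi0 : ∀ i : Fin N,
      (0 : Ωs → ℝ) =ᵐ[P] P[(fun ω => X ω i) | MeasurableSpace.comap V inferInstance] := by
    intro i
    refine ae_eq_condExp_of_forall_setIntegral_eq hm' (hXi_int i)
      (fun s _ _ => integrableOn_zero) ?_ ?_
    · intro s hs _
      have h1 : ∫ ω in s, X ω ∂P = 0 := by
        rw [← setIntegral_condExp hm' hXint hs]
        rw [setIntegral_congr_ae (hm' s hs) (hcond.mono (fun ω hω _ => hω))]
        simp
      have h4 := (EuclideanSpace.proj i (𝕜 := ℝ)).integral_comp_comm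
        (μ := P.restrict s) hXint.integrableOn
      have h5 : ∫ ω in s, X ω i ∂P = 0 := by
        have heq : (fun ω => X ω i) = fun ω => (EuclideanSpace.proj i (𝕜 := ℝ)) (X ω) := rfl
        rw [heq, h4, h1, map_zero]
      simp [h5]
    · exact StronglyMeasurable.aestronglyMeasurable
        (@stronglyMeasurable_zero Ωs ℝ (MeasurableSpace.comap V inferInstance) _ _)
  have hhi_meas : ∀ i : Fin N,
      StronglyMeasurable[MeasurableSpace.comap V inferInstance] (fun ω => h (V ω) i) := fun i =>
    Measurable.stronglyMeasurable (((measurable_pi_apply i).comp ((WithLp.measurable_ofLp 2 _).comp hh)).comp hVm')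
  have hhi_bdd : ∀ i : Fin N, ∀ᵐ ω ∂P, |h (V ω) i| ≤ Ch := by
    intro i
    filter_upwards [hCh] with ω hω
    exact le_trans (euclid_coord_le (h (V ω)) i) hω
  have hprod_int : ∀ i : Fin N,
      Integrable ((fun ω => h (V ω) i) * (fun ω => X ω i)) P := by
    intro i
    refine ⟨((((measurable_pi_apply i).comp ((WithLp.measurable_ofLp 2 _).comp hh)).comp hV).mul (hXi_meas i)).aestronglyMeasurable,
      HasFiniteIntegral.of_bounded (C := Ch * Cx) ?_⟩
    filter_upwards [hhi_bdd i] with ω hω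
    simp only [Pi.mul_apply, Real.norm_eq_abs, abs_mul]
    exact mul_le_mul hω (hXi_bdd i ω) (abs_nonneg _) (le_trans (abs_nonneg _) hω)
  have key : ∀ i : Fin N, ∫ ω, h (V ω) i * X ω i ∂P = 0 := by
    intro i
    have hmul := condExp_mul_of_stronglyMeasurable_left (μ := P) (hhi_meas i)
      (hprod_int i) (hXi_int i)
    have h0 : P[((fun ω => h (V ω) i) * (fun ω => X ω i))|
        MeasurableSpace.comap V inferInstance] =ᵐ[P] 0 := by
      refine hmul.trans ?_
      filter_upwards [hXi0 i] with ω hω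
      simp only [Pi.mul_apply, Pi.zero_apply, ← hω]
      ring
    calc ∫ ω, h (V ω) i * X ω i ∂P
        = ∫ ω, (P[((fun ω => h (V ω) i) * (fun ω => X ω i))|
            MeasurableSpace.comap V inferInstance]) ω ∂P := (integral_condExp hm').symm
    _ = ∫ _ω, (0:ℝ) ∂P := integral_congr_ae h0
    _ = 0 := by simp
  have hinner : ∀ ω, ⟪h (V ω), X ω⟫ = ∑ i, h (V ω) i * X ω i := by
    intro ω
    simp [PiLp.inner_apply, RCLike.inner_apply, conj_trivial]
    exact Finset.sum_congr rfl fun i _ => mul_comm _ _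
  calc ∫ ω, ⟪h (V ω), X ω⟫ ∂P = ∫ ω, ∑ i, h (V ω) i * X ω i ∂P := by simp_rw [hinner]
  _ = ∑ i, ∫ ω, h (V ω) i * X ω i ∂P :=
        integral_finset_sum _ (fun i _ => hprod_int i)
  _ = 0 := by simp [key]

lemma aux_integrable_of_bounded {Xt : Type*} [MeasurableSpace Xt] {μ : Measure Xt}
    [IsFiniteMeasure μ] {E : Type*} [NormedAddCommGroup E] {F : Xt → E}
    (hF : AEStronglyMeasurable F μ) (C : ℝ) (hC : ∀ᵐ x ∂μ, ‖F x‖ ≤ C) : Integrable F μ :=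
  ⟨hF, HasFiniteIntegral.of_bounded hC⟩


/-- Assume quantile regression is under quasi-specification with coefficients
`(αQR, βQR)` and set `U^QR := ∫₀¹ 1_{Y > αQR(t) + ⟪βQR(t), X⟫} dt`. Then `U^QR` solves the
correlation maximization problem with mean-independence constraint: for every `V` uniformly
distributed on `[0,1]` with `𝔼(X|V) = 0`, one has `𝔼(V·Y) ≤ 𝔼(U^QR·Y)`. -/
theorem quasi_specification_solves_correlation_maximization
    {Ωs : Type*} [MeasurableSpace Ωs] (P : Measure Ωs) [IsProbabilityMeasure P]
    {N : ℕ}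
    (X : Ωs → EuclideanSpace ℝ (Fin N)) (Y : Ωs → ℝ)
    (hX : Measurable X) (hY : Measurable Y)
    (hXbdd : ∃ C : ℝ, ∀ ω, ‖X ω‖ ≤ C) (hYbdd : ∃ C : ℝ, ∀ ω, |Y ω| ≤ C)
    (hXcentered : ∫ ω, X ω ∂P = 0)
    -- m = Law(X) is nondegenerate: its support contains a ball centered at 0
    (m : Measure (EuclideanSpace ℝ (Fin N))) (hm : m = Measure.map X P)
    (hnondeg : ∃ r > (0:ℝ), ∀ x ∈ Metric.ball (0 : EuclideanSpace ℝ (Fin N)) r,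
      ∀ s ∈ nhds x, 0 < m s)
    -- F is the conditional cdf of Y given X, Q the conditional quantile
    (F : EuclideanSpace ℝ (Fin N) → ℝ → ℝ)
    (hFmeas : Measurable (Function.uncurry F))
    (hF : ∀ y : ℝ, (fun ω => F (X ω) y) =ᵐ[P]
      P[{ω | Y ω ≤ y}.indicator (fun _ => (1:ℝ)) | MeasurableSpace.comap X inferInstance])
    (Q : EuclideanSpace ℝ (Fin N) → ℝ → ℝ)
    (hQ : ∀ x t, Q x t = sInf {α : ℝ | F x α > t})
    (hQreg : ∀ᵐ x ∂m, ContinuousOn (Q x) (Icc 0 1) ∧ StrictMonoOn (Q x) (Icc 0 1))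
    -- Law(X,Y) charges no nonvertical hyperplane
    (hNoHyper : ∀ (a : ℝ) (β : EuclideanSpace ℝ (Fin N)),
      P {ω | Y ω = a + ⟪β, X ω⟫} = 0)
    -- quasi-specification: continuous coefficients satisfying the Koenker-Bassett
    -- first-order conditions, with the monotonicity property
    (αQR : ℝ → ℝ) (βQR : ℝ → EuclideanSpace ℝ (Fin N))
    (hαcont : ContinuousOn αQR (Icc 0 1)) (hβcont : ContinuousOn βQR (Icc 0 1))
    (hfoc1 : ∀ t ∈ Icc (0:ℝ) 1,
      P {ω | αQR t + ⟪βQR t, X ω⟫ < Y ω} = ENNReal.ofReal (1 - t))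
    (hfoc2 : ∀ t ∈ Icc (0:ℝ) 1,
      ∫ ω in {ω | αQR t + ⟪βQR t, X ω⟫ < Y ω}, X ω ∂P = 0)
    (hmono : ∀ᵐ x ∂m, StrictMonoOn (fun t => αQR t + ⟪βQR t, x⟫) (Icc (0:ℝ) 1))
    -- U^QR := ∫₀¹ 1_{Y > αQR(t) + ⟪βQR(t), X⟫} dt
    (UQR : Ωs → ℝ)
    (hUQR : ∀ ω, UQR ω = ∫ t in (0:ℝ)..1,
      if αQR t + ⟪βQR t, X ω⟫ < Y ω then (1:ℝ) else 0) :
    ∀ V : Ωs → ℝ, Measurable V →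
      Measure.map V P = volume.restrict (Icc (0:ℝ) 1) →
      P[X | MeasurableSpace.comap V inferInstance] =ᵐ[P] 0 →
      ∫ ω, V ω * Y ω ∂P ≤ ∫ ω, UQR ω * Y ω ∂P := by
  intro V hV hVlaw hVcond
  obtain ⟨Cx, hCx⟩ := hXbdd
  obtain ⟨Cy, hCy⟩ := hYbdd
  -- continuous extensions of the coefficients
  set a : ℝ → ℝ := IccExtend zero_le_one ((Icc (0:ℝ) 1).restrict αQR) with hadef
  set b : ℝ → EuclideanSpace ℝ (Fin N) :=
    IccExtend zero_le_one ((Icc (0:ℝ) 1).restrict βQR) with hbdef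
  have hac : Continuous a := (continuousOn_iff_continuous_restrict.mp hαcont).Icc_extend'
  have hbc : Continuous b := (continuousOn_iff_continuous_restrict.mp hβcont).Icc_extend'
  have haeq : ∀ t ∈ Icc (0:ℝ) 1, a t = αQR t := fun t ht => IccExtend_of_mem zero_le_one _ ht
  have hbeq : ∀ t ∈ Icc (0:ℝ) 1, b t = βQR t := fun t ht => IccExtend_of_mem zero_le_one _ ht
  -- the map g
  set g : ℝ → Ωs → ℝ := fun t ω => a t + ⟪b t, X ω⟫ with hgdef
  have hgeq : ∀ t ∈ Icc (0:ℝ) 1, ∀ ω, g t ω = αQR t + ⟪βQR t, X ω⟫ := by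
    intro t ht ω
    rw [hgdef]
    simp only []
    rw [haeq t ht, hbeq t ht]
  have hgc : ∀ ω, Continuous (fun t => g t ω) := by
    intro ω
    apply hac.add
    exact continuous_inner.comp (hbc.prodMk continuous_const)
  have hgmeas : ∀ t, Measurable (fun ω => g t ω) := by
    intro t
    apply measurable_const.add
    exact ((innerSL ℝ (b t)).continuous.measurable).comp hX
  have hg_joint : Measurable (fun p : Ωs × ℝ => g p.2 p.1) := by
    apply (hac.measurable.comp measurable_snd).add
    exact continuous_inner.measurable.comp
      ((hbc.measurable.comp measurable_snd).prodMk (hX.comp measurable_fst))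
  have hsetmeas : ∀ t, MeasurableSet {ω | g t ω < Y ω} :=
    fun t => measurableSet_lt (hgmeas t) hY
  have hPset : ∀ t ∈ Icc (0:ℝ) 1, P {ω | g t ω < Y ω} = ENNReal.ofReal (1 - t) := by
    intro t ht
    have : {ω | g t ω < Y ω} = {ω | αQR t + ⟪βQR t, X ω⟫ < Y ω} := by
      ext ω; rw [mem_setOf_eq, mem_setOf_eq, hgeq t ht ω]
    rw [this]; exact hfoc1 t ht
  have hXset : ∀ t ∈ Icc (0:ℝ) 1, ∫ ω in {ω | g t ω < Y ω}, X ω ∂P = 0 := by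
    intro t ht
    have : {ω | g t ω < Y ω} = {ω | αQR t + ⟪βQR t, X ω⟫ < Y ω} := by
      ext ω; rw [mem_setOf_eq, mem_setOf_eq, hgeq t ht ω]
    rw [this]; exact hfoc2 t ht
  -- monotonicity transferred to P
  have hmono' : ∀ᵐ ω ∂P, StrictMonoOn (fun t => g t ω) (Icc (0:ℝ) 1) := by
    have h1 : ∀ᵐ x ∂(Measure.map X P),
        StrictMonoOn (fun t => αQR t + ⟪βQR t, x⟫) (Icc (0:ℝ) 1) := hm ▸ hmono
    filter_upwards [ae_of_ae_map hX.aemeasurable h1] with ω hω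
    intro s hs t ht hst
    have := hω hs ht hst
    simpa only [hgeq s hs ω, hgeq t ht ω] using this
  -- primitives
  set A : ℝ → ℝ := fun v => ∫ t in (0:ℝ)..v, a t with hAdef
  set B : ℝ → EuclideanSpace ℝ (Fin N) := fun v => ∫ t in (0:ℝ)..v, b t with hBdef
  have hAc : Continuous A :=
    intervalIntegral.continuous_primitive (fun x y => hac.intervalIntegrable x y) 0
  have hBc : Continuous B :=
    intervalIntegral.continuous_primitive (fun x y => hbc.intervalIntegrable x y) 0
  obtain ⟨Ca, hCa⟩ := isCompact_Icc.exists_bound_of_continuousOn hAc.continuousOn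
    (s := Icc (0:ℝ) 1)
  obtain ⟨Cb, hCb⟩ := isCompact_Icc.exists_bound_of_continuousOn hBc.continuousOn
    (s := Icc (0:ℝ) 1)
  obtain ⟨Caa, hCaa⟩ := isCompact_Icc.exists_bound_of_continuousOn hac.continuousOn
    (s := Icc (0:ℝ) 1)
  obtain ⟨Cbb, hCbb⟩ := isCompact_Icc.exists_bound_of_continuousOn hbc.continuousOn
    (s := Icc (0:ℝ) 1)
  -- splitting of the primitive of g
  have hbinc : ∀ ω, Continuous (fun t : ℝ => (inner ℝ (b t) (X ω) : ℝ)) := fun ω =>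
    continuous_inner.comp (hbc.prodMk continuous_const)
  have hgsplit : ∀ v ω, (∫ t in (0:ℝ)..v, g t ω) = A v + ⟪B v, X ω⟫ := by
    intro v ω
    have h1 : (∫ t in (0:ℝ)..v, g t ω)
        = (∫ t in (0:ℝ)..v, a t) + ∫ t in (0:ℝ)..v, (inner ℝ (b t) (X ω) : ℝ) := by
      rw [← intervalIntegral.integral_add (hac.intervalIntegrable 0 v)
        ((hbinc ω).intervalIntegrable 0 v)]
    rw [h1]
    congr 1
    have hcomm := (innerSL ℝ (X ω)).intervalIntegral_comp_comm (hbc.intervalIntegrable (μ := volume) 0 v)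
    simp only [innerSL_apply_apply] at hcomm
    rw [real_inner_comm, ← hcomm]
    apply intervalIntegral.integral_congr
    intro t _
    exact real_inner_comm _ _
  -- key pointwise facts
  have hkey : ∀ᵐ ω ∂P, UQR ω ∈ Icc (0:ℝ) 1 ∧
      (∀ t ∈ Icc (0:ℝ) 1, t < UQR ω → g t ω < Y ω) ∧
      (∀ t ∈ Icc (0:ℝ) 1, g t ω < Y ω → t ≤ UQR ω) ∧
      (∀ v ∈ Icc (0:ℝ) 1, v * Y ω - ∫ t in (0:ℝ)..v, g t ω
        ≤ UQR ω * Y ω - ∫ t in (0:ℝ)..(UQR ω), g t ω) := by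
    filter_upwards [hmono'] with ω hω
    obtain ⟨h1, h2, h3, h4, h5⟩ :=
      aux_pointwise (fun t => g t ω) (hgc ω) hω (Y ω) rfl
    have hUeq : UQR ω = (volume (Icc (0:ℝ) 1 ∩ {t | g t ω < Y ω})).toReal := by
      rw [hUQR ω, ← h2]
      apply intervalIntegral.integral_congr
      intro t ht
      rw [uIcc_of_le zero_le_one] at ht
      simp only [hgeq t ht ω]
    rw [hUeq]
    exact ⟨h1, h3, h4, h5⟩
  -- V takes values in [0,1] a.e.
  have hVmem : ∀ᵐ ω ∂P, V ω ∈ Icc (0:ℝ) 1 := by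
    have h1 : P (V ⁻¹' (Icc (0:ℝ) 1)) = 1 := by
      rw [← Measure.map_apply hV measurableSet_Icc, hVlaw,
        Measure.restrict_apply measurableSet_Icc]
      simp
    rw [ae_iff]
    have h2 : {ω | ¬ V ω ∈ Icc (0:ℝ) 1} = (V ⁻¹' (Icc (0:ℝ) 1))ᶜ := rfl
    rw [h2, measure_compl (hV measurableSet_Icc) (measure_ne_top _ _), h1, measure_univ]
    simp
  -- measurability of UQR
  set μt : Measure ℝ := volume.restrict (Ioc (0:ℝ) 1) with hμtdef
  haveI hμtfin : IsFiniteMeasure μt := by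
    constructor
    rw [hμtdef, Measure.restrict_apply_univ, Real.volume_Ioc]
    norm_num
  have hμtIoc : ∀ᵐ t ∂μt, t ∈ Ioc (0:ℝ) 1 := ae_restrict_mem measurableSet_Ioc
  have hUmeas : Measurable UQR := by
    have hrepr : UQR = fun ω => ∫ t, (fun p : Ωs × ℝ =>
        if g p.2 p.1 < Y p.1 then (1:ℝ) else 0) (ω, t) ∂μt := by
      funext ω
      rw [hUQR ω, intervalIntegral.integral_of_le zero_le_one]
      apply setIntegral_congr_fun measurableSet_Ioc
      intro t ht
      simp only [hgeq t (Ioc_subset_Icc_self ht) ω]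
    rw [hrepr]
    have hm1 : Measurable (fun p : Ωs × ℝ => if g p.2 p.1 < Y p.1 then (1:ℝ) else 0) :=
      Measurable.ite (measurableSet_lt hg_joint (hY.comp measurable_fst))
        measurable_const measurable_const
    exact (hm1.stronglyMeasurable.integral_prod_right').measurable
  -- a.e. boundedness facts
  have hCy0 : ∀ ω, (0:ℝ) ≤ Cy := fun ω => le_trans (abs_nonneg _) (hCy ω)
  -- product measure a.e. in Ioc
  have hprod_ae : ∀ᵐ p ∂(P.prod μt), p.2 ∈ Ioc (0:ℝ) 1 := by
    rw [ae_iff]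
    have h2 : {p : Ωs × ℝ | ¬ p.2 ∈ Ioc (0:ℝ) 1} = (univ : Set Ωs) ×ˢ (Ioc (0:ℝ) 1)ᶜ := by
      ext p; simp [Set.mem_prod]
    rw [h2, Measure.prod_prod]
    have : μt (Ioc (0:ℝ) 1)ᶜ = 0 := by
      rw [hμtdef, Measure.restrict_apply (measurableSet_Ioc.compl)]
      simp
    rw [this, mul_zero]
  -- ======== Fubini identity for UQR side, scalar version ========
  have hUside : ∀ᵐ ω ∂P, A (UQR ω) = ∫ t, (if g t ω < Y ω then a t else 0) ∂μt := by
    filter_upwards [hkey] with ω hω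
    rw [hAdef]
    simp only []
    rw [aux_repr a hac hω.1]
    apply integral_congr_ae
    have hne : ∀ᵐ t ∂μt, t ≠ UQR ω :=
      ae_restrict_of_ae (by
        rw [ae_iff]
        simp only [not_not]
        exact measure_mono_null (fun x hx => hx) (Real.volume_singleton))
    filter_upwards [hμtIoc, hne] with t ht htne
    by_cases hlt : t < UQR ω
    · rw [if_pos hlt, if_pos (hω.2.1 t (Ioc_subset_Icc_self ht) hlt)]
    · rw [if_neg hlt, if_neg]
      intro hgt
      exact hlt (lt_of_le_of_ne (hω.2.2.1 t (Ioc_subset_Icc_self ht) hgt) htne)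
  have hUsideB : ∀ᵐ ω ∂P, ⟪B (UQR ω), X ω⟫
      = ∫ t, (if g t ω < Y ω then ⟪b t, X ω⟫ else 0) ∂μt := by
    filter_upwards [hkey] with ω hω
    have hb1 : ⟪B (UQR ω), X ω⟫ = ∫ t in (0:ℝ)..(UQR ω), ⟪b t, X ω⟫ := by
      have hcomm := (innerSL ℝ (X ω)).intervalIntegral_comp_comm
        (hbc.intervalIntegrable (μ := volume) 0 (UQR ω))
      simp only [innerSL_apply_apply] at hcomm
      rw [hBdef]
      simp only []
      rw [real_inner_comm, ← hcomm]
      apply intervalIntegral.integral_congr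
      intro t _
      exact real_inner_comm _ _
    rw [hb1, aux_repr (fun t => ⟪b t, X ω⟫)
      (continuous_inner.comp (hbc.prodMk continuous_const)) hω.1]
    apply integral_congr_ae
    have hne : ∀ᵐ t ∂μt, t ≠ UQR ω :=
      ae_restrict_of_ae (by
        rw [ae_iff]
        simp only [not_not]
        exact measure_mono_null (fun x hx => hx) (Real.volume_singleton))
    filter_upwards [hμtIoc, hne] with t ht htne
    by_cases hlt : t < UQR ω
    · rw [if_pos hlt, if_pos (hω.2.1 t (Ioc_subset_Icc_self ht) hlt)]
    · rw [if_neg hlt, if_neg]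
      intro hgt
      exact hlt (lt_of_le_of_ne (hω.2.2.1 t (Ioc_subset_Icc_self ht) hgt) htne)
  -- integrability on the product space
  have hswapA : Integrable (Function.uncurry fun ω t =>
      if g t ω < Y ω then a t else 0) (P.prod μt) := by
    refine aux_integrable_of_bounded ?_ Caa ?_
    · refine (Measurable.ite (measurableSet_lt hg_joint (hY.comp measurable_fst))
        (hac.measurable.comp measurable_snd) measurable_const).aestronglyMeasurable
    · filter_upwards [hprod_ae] with p hp
      by_cases hc : g p.2 p.1 < Y p.1
      · simp only [Function.uncurry, hc, if_true]
        exact hCaa p.2 (Ioc_subset_Icc_self hp)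
      · simp only [Function.uncurry, hc, if_false, norm_zero]
        exact le_trans (norm_nonneg (a p.2)) (hCaa p.2 (Ioc_subset_Icc_self hp))
  have hswapB : Integrable (Function.uncurry fun ω t =>
      if g t ω < Y ω then ⟪b t, X ω⟫ else 0) (P.prod μt) := by
    refine aux_integrable_of_bounded ?_ (Cbb * Cx) ?_
    · refine (Measurable.ite (measurableSet_lt hg_joint (hY.comp measurable_fst))
        (continuous_inner.measurable.comp
          ((hbc.measurable.comp measurable_snd).prodMk (hX.comp measurable_fst)))
        measurable_const).aestronglyMeasurable
    · filter_upwards [hprod_ae] with p hp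
      have hb : ‖⟪b p.2, X p.1⟫‖ ≤ Cbb * Cx := by
        rw [Real.norm_eq_abs]
        refine le_trans (abs_real_inner_le_norm _ _) ?_
        exact mul_le_mul (hCbb p.2 (Ioc_subset_Icc_self hp)) (hCx p.1) (norm_nonneg _)
          (le_trans (norm_nonneg _) (hCbb p.2 (Ioc_subset_Icc_self hp)))
      by_cases hc : g p.2 p.1 < Y p.1
      · simpa only [Function.uncurry, hc, if_true] using hb
      · simp only [Function.uncurry, hc, if_false, norm_zero]
        exact le_trans (norm_nonneg _) hb
  -- I5
  have hI5 : ∫ ω, A (UQR ω) ∂P = ∫ t, a t * (1 - t) ∂μt := by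
    rw [integral_congr_ae hUside, integral_integral_swap hswapA]
    apply integral_congr_ae
    filter_upwards [hμtIoc] with t ht
    have hind : (fun ω => if g t ω < Y ω then a t else 0)
        = {ω | g t ω < Y ω}.indicator (fun _ => a t) := by
      funext ω
      by_cases hc : g t ω < Y ω <;> simp [indicator, hc]
    rw [hind, integral_indicator (hsetmeas t), setIntegral_const, smul_eq_mul,
      Measure.real, hPset t (Ioc_subset_Icc_self ht), ENNReal.toReal_ofReal (by linarith [ht.2])]
    ring
  -- I6
  have hI6 : ∫ ω, ⟪B (UQR ω), X ω⟫ ∂P = 0 := by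
    rw [integral_congr_ae hUsideB, integral_integral_swap hswapB]
    have hz : ∀ᵐ t ∂μt, (∫ ω, (if g t ω < Y ω then ⟪b t, X ω⟫ else 0) ∂P) = 0 := by
      filter_upwards [hμtIoc] with t ht
      have hind : (fun ω => if g t ω < Y ω then ⟪b t, X ω⟫ else 0)
          = {ω | g t ω < Y ω}.indicator (fun ω => ⟪b t, X ω⟫) := by
        funext ω
        by_cases hc : g t ω < Y ω <;> simp [indicator, hc]
      rw [hind, integral_indicator (hsetmeas t)]
      have hXint : Integrable X P :=
        ⟨hX.aestronglyMeasurable, HasFiniteIntegral.of_bounded (ae_of_all _ hCx)⟩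
      have hcomm := (innerSL ℝ (b t)).integral_comp_comm
        (μ := P.restrict {ω | g t ω < Y ω}) hXint.integrableOn
      simp only [innerSL_apply_apply] at hcomm
      rw [hcomm, hXset t (Ioc_subset_Icc_self ht), inner_zero_right]
    rw [integral_congr_ae hz]
    simp
  -- I2
  have hI2 : ∫ ω, A (V ω) ∂P = ∫ t, a t * (1 - t) ∂μt := by
    have h1 : ∫ ω, A (V ω) ∂P = ∫ v in Icc (0:ℝ) 1, A v := by
      rw [← hVlaw, integral_map hV.aemeasurable hAc.aestronglyMeasurable]
    rw [h1, integral_Icc_eq_integral_Ioc]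
    have h2 : ∀ᵐ v ∂μt, A v = ∫ t, (if t < v then a t else 0) ∂μt := by
      filter_upwards [hμtIoc] with v hv
      rw [hAdef]
      simp only []
      exact aux_repr a hac (Ioc_subset_Icc_self hv)
    have hswapH : Integrable (Function.uncurry fun v t =>
        if t < v then a t else 0) (μt.prod μt) := by
      refine aux_integrable_of_bounded ?_ Caa ?_
      · refine (Measurable.ite (measurableSet_lt measurable_snd measurable_fst)
          (hac.measurable.comp measurable_snd) measurable_const).aestronglyMeasurable
      · have hprod_ae2 : ∀ᵐ p ∂(μt.prod μt), p.2 ∈ Ioc (0:ℝ) 1 := by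
          rw [ae_iff]
          have h2' : {p : ℝ × ℝ | ¬ p.2 ∈ Ioc (0:ℝ) 1}
              = (univ : Set ℝ) ×ˢ (Ioc (0:ℝ) 1)ᶜ := by
            ext p; simp [Set.mem_prod]
          rw [h2', Measure.prod_prod]
          have : μt (Ioc (0:ℝ) 1)ᶜ = 0 := by
            rw [hμtdef, Measure.restrict_apply (measurableSet_Ioc.compl)]
            simp
          rw [this, mul_zero]
        filter_upwards [hprod_ae2] with p hp
        by_cases hc : p.2 < p.1
        · simp only [Function.uncurry, hc, if_true]
          exact hCaa p.2 (Ioc_subset_Icc_self hp)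
        · simp only [Function.uncurry, hc, if_false, norm_zero]
          exact le_trans (norm_nonneg (a p.2)) (hCaa p.2 (Ioc_subset_Icc_self hp))
    calc ∫ v in Ioc (0:ℝ) 1, A v = ∫ v, A v ∂μt := by rw [hμtdef]
    _ = ∫ v, ∫ t, (if t < v then a t else 0) ∂μt ∂μt := integral_congr_ae h2
    _ = ∫ t, ∫ v, (if t < v then a t else 0) ∂μt ∂μt := integral_integral_swap hswapH
    _ = ∫ t, a t * (1 - t) ∂μt := by
        apply integral_congr_ae
        filter_upwards [hμtIoc] with t ht
        have hind : (fun v => if t < v then a t else 0)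
            = (Ioi t).indicator (fun _ => a t) := by
          funext v
          by_cases hc : t < v <;> simp [indicator, hc]
        rw [hind, integral_indicator measurableSet_Ioi, setIntegral_const, smul_eq_mul]
        have hμ : μt (Ioi t) = ENNReal.ofReal (1 - t) := by
          rw [hμtdef, Measure.restrict_apply measurableSet_Ioi]
          have : Ioi t ∩ Ioc (0:ℝ) 1 = Ioc t 1 := by
            ext v
            constructor
            · rintro ⟨h1', h2', h3'⟩; exact ⟨h1', h3'⟩
            · rintro ⟨h1', h2'⟩; exact ⟨h1', lt_trans ht.1 h1', h2'⟩
          rw [this, Real.volume_Ioc]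
        rw [Measure.real, hμ, ENNReal.toReal_ofReal (by linarith [ht.2])]
        ring
  -- I3
  have hI3 : ∫ ω, ⟪B (V ω), X ω⟫ ∂P = 0 := by
    set Bc : ℝ → EuclideanSpace ℝ (Fin N) := fun v => B (min 1 (max 0 v)) with hBcdef
    have hBcc : Continuous Bc :=
      hBc.comp ((continuous_const.min ((continuous_const.max continuous_id))))
    have h1 : ∫ ω, ⟪B (V ω), X ω⟫ ∂P = ∫ ω, ⟪Bc (V ω), X ω⟫ ∂P := by
      apply integral_congr_ae
      filter_upwards [hVmem] with ω hω
      rw [hBcdef]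
      simp only []
      rw [max_eq_right hω.1, min_eq_right hω.2]
    rw [h1]
    apply aux_condexp P X hX Cx hCx V hV hVcond Bc hBcc.measurable Cb
    apply ae_of_all
    intro ω
    rw [hBcdef]
    simp only []
    apply hCb
    constructor
    · exact le_min zero_le_one (le_max_left 0 (V ω))
    · exact min_le_left 1 _
  -- integrability of the six functions over P
  have hXYint : Integrable (fun ω => V ω * Y ω) P := by
    refine aux_integrable_of_bounded ((hV.mul hY).aestronglyMeasurable) (1 * Cy) ?_
    filter_upwards [hVmem] with ω hω
    rw [Real.norm_eq_abs, abs_mul]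
    refine mul_le_mul (abs_le.mpr ⟨by linarith [hω.1], hω.2⟩) (hCy ω) (abs_nonneg _)
      zero_le_one
  have hUYint : Integrable (fun ω => UQR ω * Y ω) P := by
    refine aux_integrable_of_bounded ((hUmeas.mul hY).aestronglyMeasurable) (1 * Cy) ?_
    filter_upwards [hkey] with ω hω
    rw [Real.norm_eq_abs, abs_mul]
    refine mul_le_mul (abs_le.mpr ⟨by linarith [hω.1.1], hω.1.2⟩) (hCy ω) (abs_nonneg _)
      zero_le_one
  have hAVint : Integrable (fun ω => A (V ω)) P := by
    refine aux_integrable_of_bounded ((hAc.measurable.comp hV).aestronglyMeasurable) Ca ?_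
    filter_upwards [hVmem] with ω hω
    exact hCa (V ω) hω
  have hAUint : Integrable (fun ω => A (UQR ω)) P := by
    refine aux_integrable_of_bounded ((hAc.measurable.comp hUmeas).aestronglyMeasurable) Ca ?_
    filter_upwards [hkey] with ω hω
    exact hCa (UQR ω) hω.1
  have hBVint : Integrable (fun ω => ⟪B (V ω), X ω⟫) P := by
    refine aux_integrable_of_bounded
      (((continuous_inner.measurable).comp
        ((hBc.measurable.comp hV).prodMk hX)).aestronglyMeasurable) (Cb * Cx) ?_
    filter_upwards [hVmem] with ω hω
    rw [Real.norm_eq_abs]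
    refine le_trans (abs_real_inner_le_norm _ _) ?_
    exact mul_le_mul (hCb (V ω) hω) (hCx ω) (norm_nonneg _)
      (le_trans (norm_nonneg _) (hCb (V ω) hω))
  have hBUint : Integrable (fun ω => ⟪B (UQR ω), X ω⟫) P := by
    refine aux_integrable_of_bounded
      (((continuous_inner.measurable).comp
        ((hBc.measurable.comp hUmeas).prodMk hX)).aestronglyMeasurable) (Cb * Cx) ?_
    filter_upwards [hkey] with ω hω
    rw [Real.norm_eq_abs]
    refine le_trans (abs_real_inner_le_norm _ _) ?_
    exact mul_le_mul (hCb (UQR ω) hω.1) (hCx ω) (norm_nonneg _)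
      (le_trans (norm_nonneg _) (hCb (UQR ω) hω.1))
  -- main inequality
  have hmain : ∫ ω, (V ω * Y ω - A (V ω) - ⟪B (V ω), X ω⟫) ∂P
      ≤ ∫ ω, (UQR ω * Y ω - A (UQR ω) - ⟪B (UQR ω), X ω⟫) ∂P := by
    refine integral_mono_ae ((hXYint.sub hAVint).sub hBVint)
      ((hUYint.sub hAUint).sub hBUint) ?_
    filter_upwards [hkey, hVmem] with ω hω hVω
    have h5 := hω.2.2.2 (V ω) hVω
    rw [hgsplit (V ω) ω, hgsplit (UQR ω) ω] at h5
    linarith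
  have hf1 : Integrable (fun ω => V ω * Y ω - A (V ω)) P := hXYint.sub hAVint
  have hf2 : Integrable (fun ω => UQR ω * Y ω - A (UQR ω)) P := hUYint.sub hAUint
  rw [integral_sub hf1 hBVint, integral_sub hXYint hAVint,
    integral_sub hf2 hBUint, integral_sub hUYint hAUint] at hmain
  rw [hI2, hI3, hI5, hI6] at hmain
  linarith
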